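/- For every n ∈ ℕ, the eigenvalues of the Hilbert L-matrix L_n are simple and satisfy 0 < μ_{1,n} < μ_{2,n} < … < μ_{n,n} < 4; in particular 4 is not an eigenvalue of L_n for any n. -/

import Mathlib

open Filter Matrix

/-- The generalized Hilbert L-matrix `L_n(ν)` with entries `1/(max(i,j)+ν)`. -/
noncomputable def Lmat (ν : ℝ) (n : ℕ) : Matrix (Fin n) (Fin n) ℝ :=
  Matrix.of fun i j => 1 / ((max (i : ℕ) (j : ℕ) : ℝ) + ν)

theorem Lmat_isHermitian (ν : ℝ) (n : ℕ) : (Lmat ν n).IsHermitian := by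
  unfold Matrix.IsHermitian
  ext i j
  simp [Lmat, Matrix.conjTranspose_apply, max_comm]

/-- The eigenvalues of `L_n(ν)` listed (with multiplicity) in nondecreasing order,
indexed by `Fin n` (so `evals ν n ⟨j-1,_⟩ = μ_{j,n}(ν)`). -/
noncomputable def evals (ν : ℝ) (n : ℕ) : Fin n → ℝ :=
  fun j => (Lmat_isHermitian ν n).eigenvalues (Tuple.sort ((Lmat_isHermitian ν n).eigenvalues) j)

/-- `muL ν n j = μ_{j+1,n}(ν)`, the `(j+1)`-th smallest eigenvalue (0-based index `j`),
with junk value `0` when `j ≥ n`. -/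
noncomputable def muL (ν : ℝ) (n : ℕ) (j : ℕ) : ℝ :=
  if h : j < n then evals ν n ⟨j, h⟩ else 0

/-! ### Auxiliary material for the proof -/

open Finset

namespace HilbertLAux

/-- partial sums -/
noncomputable def A (x : ℕ → ℝ) (n : ℕ) : ℝ := ∑ i ∈ range n, x i

/-- weighted sum of squared partial sums -/
noncomputable def T (x : ℕ → ℝ) (n : ℕ) : ℝ :=
  ∑ k ∈ range n, (A x (k+1))^2 / (((k:ℝ)+1)*((k:ℝ)+2))

lemma key_identity (x : ℕ → ℝ) : ∀ n : ℕ, 1 ≤ n →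
    ∑ i ∈ range n, ∑ j ∈ range n, x i * x j / (((max i j : ℕ) : ℝ) + 1)
      = T x n + (A x n)^2 / ((n:ℝ)+1) := by
  intro n hn
  induction n, hn using Nat.le_induction with
  | base => simp [T, A]; norm_num; ring
  | succ n hn ih =>
    have hn1 : ((n:ℝ)+1) ≠ 0 := by positivity
    have hn2 : ((n:ℝ)+2) ≠ 0 := by positivity
    rw [Finset.sum_range_succ]
    conv_lhs => rw [Finset.sum_congr rfl (fun i hi => Finset.sum_range_succ
      (fun j => x i * x j / (((max i j : ℕ) : ℝ) + 1)) n)]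
    rw [Finset.sum_add_distrib, ih]
    have h1 : ∀ i ∈ range n, x i * x n / (((max i n : ℕ) : ℝ) + 1) = x i * x n / ((n:ℝ)+1) := by
      intro i hi
      rw [Nat.max_eq_right (le_of_lt (mem_range.mp hi))]
    have h2 : ∀ j ∈ range n, x n * x j / (((max n j : ℕ) : ℝ) + 1) = x n * x j / ((n:ℝ)+1) := by
      intro j hj
      rw [Nat.max_eq_left (le_of_lt (mem_range.mp hj))]
    rw [Finset.sum_congr rfl h1, Finset.sum_range_succ, Finset.sum_congr rfl h2]
    rw [Nat.max_self]
    have hT : T x (n+1) = T x n + (A x (n+1))^2 / (((n:ℝ)+1)*((n:ℝ)+2)) := by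
      rw [T, Finset.sum_range_succ]; rfl
    have hA : A x (n+1) = A x n + x n := Finset.sum_range_succ x n
    rw [hT, hA]
    push_cast
    have e1 : ∑ i ∈ range n, x i * x n / ((n:ℝ)+1) = (A x n) * x n / ((n:ℝ)+1) := by
      rw [A, ← Finset.sum_div, ← Finset.sum_mul]
    have e2 : ∑ j ∈ range n, x n * x j / ((n:ℝ)+1) = x n * (A x n) / ((n:ℝ)+1) := by
      rw [A, ← Finset.sum_div, ← Finset.mul_sum]
    rw [e1, e2]
    field_simp
    ring

lemma hardy (x : ℕ → ℝ) : ∀ n : ℕ, 1 ≤ n →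
    T x n + (A x n)^2 * (1/(n:ℝ) + 1/((n:ℝ)+1)) + 2 * ∑ k ∈ range n, (x k)^2/((k:ℝ)+1)
      ≤ 4 * ∑ i ∈ range n, (x i)^2 := by
  intro n hn
  induction n, hn using Nat.le_induction with
  | base =>
    simp [T, A]
    norm_num
    nlinarith [sq_nonneg (x 0)]
  | succ n hn ih =>
    have hm : (1:ℝ) ≤ (n:ℝ) := by exact_mod_cast hn
    have h0 : ((n:ℝ)) ≠ 0 := by positivity
    have hn1 : ((n:ℝ)+1) ≠ 0 := by positivity
    have hn2 : ((n:ℝ)+2) ≠ 0 := by positivity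
    have hT : T x (n+1) = T x n + (A x (n+1))^2 / (((n:ℝ)+1)*((n:ℝ)+2)) := by
      rw [T, Finset.sum_range_succ]; rfl
    have hA : A x (n+1) = A x n + x n := Finset.sum_range_succ x n
    rw [hT, hA, Finset.sum_range_succ (fun k => (x k)^2/((k:ℝ)+1)),
      Finset.sum_range_succ (fun i => (x i)^2)]
    push_cast
    rw [show ((n:ℝ)+1+1) = (n:ℝ)+2 from by ring]
    set S := A x n with hS
    set t := x n with ht
    have key : (S + t)^2 / (((n:ℝ)+1)*((n:ℝ)+2))
        + (S + t)^2 * (1/((n:ℝ)+1) + 1/((n:ℝ)+2)) + 2 * (t^2/((n:ℝ)+1))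
        = S^2 * (1/(n:ℝ) + 1/((n:ℝ)+1)) + 4 * t^2
          - (S - 2*(n:ℝ)*t)^2 / ((n:ℝ)*((n:ℝ)+1)) := by
      field_simp
      ring
    have hsq : 0 ≤ (S - 2*(n:ℝ)*t)^2 / ((n:ℝ)*((n:ℝ)+1)) := by positivity
    linarith [ih]

lemma row_eq {n : ℕ} {μ : ℝ} {v : Fin n → ℝ}
    (hv : Lmat 1 n *ᵥ v = μ • v) (x : ℕ → ℝ)
    (hx : ∀ i : ℕ, x i = if h : i < n then v ⟨i, h⟩ else 0)
    {i : ℕ} (hi : i < n) :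
    μ * x i = (∑ j ∈ range (i+1), x j) / ((i:ℝ)+1)
      + ∑ j ∈ Ico (i+1) n, x j / ((j:ℝ)+1) := by
  have h1 := congrFun hv ⟨i, hi⟩
  rw [Matrix.mulVec, dotProduct] at h1
  have h1' : ∑ j ∈ range n, 1 / (((max i j : ℕ) : ℝ) + 1) * x j = μ * x i := by
    rw [← Fin.sum_univ_eq_sum_range (fun j => 1 / (((max i j : ℕ) : ℝ) + 1) * x j) n]
    have h2 : ∀ j : Fin n, 1 / (((max i (j:ℕ) : ℕ) : ℝ) + 1) * x (j:ℕ)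
        = Lmat 1 n ⟨i, hi⟩ j * v j := by
      intro j
      simp only [Lmat, Matrix.of_apply, hx]
      rw [dif_pos j.isLt]
      simp [Nat.cast_max]
    rw [Finset.sum_congr rfl (fun j _ => h2 j), h1, Pi.smul_apply, smul_eq_mul,
      hx, dif_pos hi]
  have hsplit : ∑ j ∈ range n, (1 / (((max i j : ℕ) : ℝ) + 1) * x j)
      = (∑ j ∈ range (i+1), 1 / (((max i j : ℕ) : ℝ) + 1) * x j)
        + ∑ j ∈ Ico (i+1) n, 1 / (((max i j : ℕ) : ℝ) + 1) * x j := by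
    rw [Finset.range_eq_Ico, ← Finset.sum_Ico_consecutive _ (Nat.zero_le (i+1)) hi, Finset.range_eq_Ico]
  rw [hsplit] at h1'
  have e1 : ∑ j ∈ range (i+1), 1 / (((max i j : ℕ) : ℝ) + 1) * x j
      = (∑ j ∈ range (i+1), x j) / ((i:ℝ)+1) := by
    rw [Finset.sum_div]
    refine Finset.sum_congr rfl fun j hj => ?_
    rw [Nat.max_eq_left (Nat.lt_succ_iff.mp (mem_range.mp hj))]
    rw [one_div, inv_mul_eq_div]
  have e2 : ∑ j ∈ Ico (i+1) n, 1 / (((max i j : ℕ) : ℝ) + 1) * x j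
      = ∑ j ∈ Ico (i+1) n, x j / ((j:ℝ)+1) := by
    refine Finset.sum_congr rfl fun j hj => ?_
    rw [Nat.max_eq_right (le_of_lt (mem_Ico.mp hj).1)]
    rw [one_div, inv_mul_eq_div]
  rw [e1, e2] at h1'
  linarith [h1']

lemma eigen_last_zero {n : ℕ} (hn : 1 ≤ n) {μ : ℝ} (hμ : μ ≠ 0) {v : Fin n → ℝ}
    (hv : Lmat 1 n *ᵥ v = μ • v) (hlast : v ⟨n-1, by omega⟩ = 0) : v = 0 := by
  set x : ℕ → ℝ := fun i => if h : i < n then v ⟨i, h⟩ else 0 with hxdef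
  have hx : ∀ i : ℕ, x i = if h : i < n then v ⟨i, h⟩ else 0 := fun i => rfl
  have key : ∀ d : ℕ, (∀ j : ℕ, n - 1 - d ≤ j → x j = 0)
      ∧ (∑ j ∈ range (n - d), x j) = 0 := by
    intro d
    induction d with
    | zero =>
      have hz : ∀ j : ℕ, n - 1 ≤ j → x j = 0 := by
        intro j hj
        rcases lt_or_ge j n with h | h
        · have hj' : j = n - 1 := by omega
          subst hj'
          rw [hx, dif_pos h]
          convert hlast
        · rw [hx, dif_neg (by omega)]
      refine ⟨by simpa using hz, ?_⟩
      have hrow := row_eq hv x hx (show n - 1 < n by omega)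
      have h0 : x (n-1) = 0 := hz _ le_rfl
      have h2 : ∑ j ∈ Ico (n-1+1) n, x j / ((j:ℝ)+1) = 0 := by
        rw [show n - 1 + 1 = n by omega]
        simp
      rw [h0, h2, mul_zero, add_zero, show n - 1 + 1 = n by omega] at hrow
      have hden : (((n-1 : ℕ):ℝ) + 1) ≠ 0 := by positivity
      rw [show n - 0 = n by omega]
      exact (div_eq_zero_iff.mp hrow.symm).resolve_right hden
    | succ d ih =>
      obtain ⟨ihz, ihs⟩ := ih
      rcases le_or_gt n (d + 1) with hdn | hdn
      · have hall : ∀ j : ℕ, x j = 0 := fun j => ihz j (by omega)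
        exact ⟨fun j _ => hall j, Finset.sum_eq_zero fun j _ => hall j⟩
      · obtain ⟨i, hidef⟩ : ∃ i, i = n - d - 2 := ⟨_, rfl⟩
        have hin : i < n := by omega
        have hstep : ∀ j : ℕ, i + 1 ≤ j → x j = 0 := by
          intro j hj; exact ihz j (by omega)
        have hS : ∑ j ∈ range (i + 1), x j = 0 := by
          have hsp : ∑ j ∈ range (n - d), x j
              = ∑ j ∈ range (i + 1), x j + ∑ j ∈ Ico (i+1) (n - d), x j := by
            rw [Finset.range_eq_Ico,
              ← Finset.sum_Ico_consecutive _ (Nat.zero_le (i+1)) (by omega : i + 1 ≤ n - d), Finset.range_eq_Ico]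
          rw [hsp] at ihs
          have hz2 : ∑ j ∈ Ico (i+1) (n - d), x j = 0 :=
            Finset.sum_eq_zero fun j hj => hstep j (mem_Ico.mp hj).1
          linarith [ihs, hz2]
        have hrow := row_eq hv x hx hin
        have hR : ∑ j ∈ Ico (i+1) n, x j / ((j:ℝ)+1) = 0 :=
          Finset.sum_eq_zero fun j hj => by
            rw [hstep j (mem_Ico.mp hj).1, zero_div]
        rw [hS, hR, zero_div, add_zero] at hrow
        have hxi : x i = 0 := (mul_eq_zero.mp hrow).resolve_left hμ
        constructor
        · intro j hj
          rcases Nat.lt_or_ge j (i+1) with h | h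
          · have hji : j = i := by omega
            rw [hji]; exact hxi
          · exact hstep j h
        · rw [show n - (d+1) = i + 1 by omega]
          exact hS
  funext k
  have hk := (key (n-1)).1 k (by omega)
  rw [hx, dif_pos k.isLt] at hk
  simpa using hk

/-- quadratic form of `Lmat 1 n` as a double range-sum over the extension `x`. -/
lemma qf_eq {n : ℕ} (v : Fin n → ℝ) (x : ℕ → ℝ)
    (hx : ∀ i : ℕ, x i = if h : i < n then v ⟨i, h⟩ else 0) :
    v ⬝ᵥ (Lmat 1 n *ᵥ v)
      = ∑ a ∈ range n, ∑ b ∈ range n, x a * x b / (((max a b : ℕ) : ℝ) + 1) := by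
  rw [dotProduct]
  rw [← Fin.sum_univ_eq_sum_range
    (fun a => ∑ b ∈ range n, x a * x b / (((max a b : ℕ) : ℝ) + 1)) n]
  refine Finset.sum_congr rfl fun a _ => ?_
  rw [Matrix.mulVec, dotProduct, Finset.mul_sum]
  rw [← Fin.sum_univ_eq_sum_range
    (fun b => x (a:ℕ) * x b / (((max (a:ℕ) b : ℕ) : ℝ) + 1)) n]
  refine Finset.sum_congr rfl fun b _ => ?_
  simp only [Lmat, Matrix.of_apply, hx, dif_pos a.isLt, dif_pos b.isLt]
  rw [Nat.cast_max]
  ring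

lemma eig_bounds {n : ℕ} (i : Fin n) :
    0 < (Lmat_isHermitian 1 n).eigenvalues i ∧ (Lmat_isHermitian 1 n).eigenvalues i < 4 := by
  set μ := (Lmat_isHermitian 1 n).eigenvalues i with hμdef
  set v : Fin n → ℝ := ⇑((Lmat_isHermitian 1 n).eigenvectorBasis i) with hvdef
  have hv : Lmat 1 n *ᵥ v = μ • v := (Lmat_isHermitian 1 n).mulVec_eigenvectorBasis i
  have hBne : (Lmat_isHermitian 1 n).eigenvectorBasis i ≠ 0 :=
    (Lmat_isHermitian 1 n).eigenvectorBasis.orthonormal.ne_zero i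
  have hvne : v ≠ 0 := by
    intro hc
    apply hBne
    ext a
    exact congrFun hc a
  obtain ⟨a0, ha0⟩ : ∃ a, v a ≠ 0 := Function.ne_iff.mp hvne
  set x : ℕ → ℝ := fun i => if h : i < n then v ⟨i, h⟩ else 0 with hxdef
  have hx : ∀ i : ℕ, x i = if h : i < n then v ⟨i, h⟩ else 0 := fun i => rfl
  have hex : ∃ k, x k ≠ 0 := ⟨a0, by rw [hx, dif_pos a0.isLt]; simpa using ha0⟩
  set k0 := Nat.find hex with hk0def
  have hk0 : x k0 ≠ 0 := Nat.find_spec hex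
  have hmin : ∀ m, m < k0 → x m = 0 := fun m hm => not_not.mp (Nat.find_min hex hm)
  have hk0n : k0 < n := by
    by_contra hcon
    exact hk0 (by rw [hx, dif_neg (by omega)])
  have hn : 1 ≤ n := by omega
  have hAk0 : A x (k0+1) = x k0 := by
    rw [A]
    refine Finset.sum_eq_single k0 (fun b hb hbne => hmin b ?_) (fun hnm => ?_)
    · have := mem_range.mp hb; omega
    · exact absurd (mem_range.mpr (by omega)) hnm
  have hsqpos : 0 < (x k0)^2 := lt_of_le_of_ne (sq_nonneg _) (Ne.symm (pow_ne_zero 2 hk0))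
  have hTpos : 0 < T x n := by
    rw [T]
    refine Finset.sum_pos' (fun k _ => by positivity) ⟨k0, mem_range.mpr hk0n, ?_⟩
    rw [hAk0]
    positivity
  have hqf : v ⬝ᵥ (Lmat 1 n *ᵥ v) = T x n + (A x n)^2/((n:ℝ)+1) :=
    (qf_eq v x hx).trans (key_identity x n hn)
  have hdot : v ⬝ᵥ v = ∑ k ∈ range n, (x k)^2 := by
    rw [dotProduct, ← Fin.sum_univ_eq_sum_range (fun k => (x k)^2) n]
    refine Finset.sum_congr rfl fun a _ => ?_
    rw [hx, dif_pos a.isLt]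
    simp [sq]
  have hdotpos : 0 < v ⬝ᵥ v := by
    rw [hdot]
    exact Finset.sum_pos' (fun k _ => sq_nonneg _) ⟨k0, mem_range.mpr hk0n, hsqpos⟩
  have hμd : μ * (v ⬝ᵥ v) = T x n + (A x n)^2/((n:ℝ)+1) := by
    rw [← hqf, hv, dotProduct_smul, smul_eq_mul]
  have hEpos : 0 < ∑ k ∈ range n, (x k)^2/((k:ℝ)+1) := by
    refine Finset.sum_pos' (fun k _ => by positivity) ⟨k0, mem_range.mpr hk0n, by positivity⟩
  have hH := hardy x n hn
  have hnR : (1:ℝ) ≤ (n:ℝ) := by exact_mod_cast hn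
  have hAterm : (A x n)^2/((n:ℝ)+1) ≤ (A x n)^2 * (1/(n:ℝ) + 1/((n:ℝ)+1)) := by
    have h1 : 0 ≤ (A x n)^2 / (n:ℝ) := by positivity
    rw [mul_add, mul_one_div, mul_one_div]
    linarith
  constructor
  · have hqpos : 0 < μ * (v ⬝ᵥ v) := by
      rw [hμd]; positivity
    rcases mul_pos_iff.mp hqpos with h | h
    · exact h.1
    · exact absurd hdotpos (not_lt.mpr h.2.le)
  · have hlt : μ * (v ⬝ᵥ v) < 4 * (v ⬝ᵥ v) := by
      rw [hμd, hdot]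
      linarith
    exact lt_of_mul_lt_mul_right (by linarith [hlt]) hdotpos.le

lemma eig_inj {n : ℕ} : Function.Injective (Lmat_isHermitian 1 n).eigenvalues := by
  intro i j hij
  by_contra hne
  set B := (Lmat_isHermitian 1 n).eigenvectorBasis with hBdef
  set μ := (Lmat_isHermitian 1 n).eigenvalues i with hμdef
  have hμpos : 0 < μ := (eig_bounds i).1
  have hμ0 : μ ≠ 0 := ne_of_gt hμpos
  set v : Fin n → ℝ := ⇑(B i) with hvdef
  set w : Fin n → ℝ := ⇑(B j) with hwdef
  have hv : Lmat 1 n *ᵥ v = μ • v := (Lmat_isHermitian 1 n).mulVec_eigenvectorBasis i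
  have hw : Lmat 1 n *ᵥ w = μ • w := by
    have := (Lmat_isHermitian 1 n).mulVec_eigenvectorBasis j
    rwa [← hij] at this
  have hn : 1 ≤ n := i.pos
  set last : Fin n := ⟨n-1, by omega⟩ with hlastdef
  have hvne : v ≠ 0 := by
    intro hc
    apply B.orthonormal.ne_zero i
    ext a
    exact congrFun hc a
  have hwne : w ≠ 0 := by
    intro hc
    apply B.orthonormal.ne_zero j
    ext a
    exact congrFun hc a
  have hvlast : v last ≠ 0 := by
    intro hc
    exact hvne (eigen_last_zero hn hμ0 hv hc)
  have hwlast : w last ≠ 0 := by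
    intro hc
    exact hwne (eigen_last_zero hn hμ0 hw hc)
  -- the combination u has last coordinate 0
  set u : Fin n → ℝ := v last • w - w last • v with hudef
  have hu : Lmat 1 n *ᵥ u = μ • u := by
    rw [hudef, Matrix.mulVec_sub, Matrix.mulVec_smul, Matrix.mulVec_smul, hv, hw,
      smul_sub]
    rw [smul_comm (v last) μ, smul_comm (w last) μ]
  have hulast : u last = 0 := by
    simp only [hudef, Pi.sub_apply, Pi.smul_apply, smul_eq_mul]
    ring
  have hu0 : u = 0 := eigen_last_zero hn hμ0 hu hulast
  have hsmul : v last • w = w last • v := sub_eq_zero.mp hu0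
  -- pass to the Euclidean space to use orthogonality
  have hEu : (v last) • (B j) = (w last) • (B i) := by
    ext a
    exact congrFun hsmul a
  have horth : (inner ℝ (B i) (B j) : ℝ) = 0 := B.orthonormal.2 hne
  have hnorm : (inner ℝ (B i) (B i) : ℝ) = 1 := by
    rw [real_inner_self_eq_norm_sq, B.orthonormal.1 i]
    norm_num
  have hcontr : v last * (inner ℝ (B i) (B j) : ℝ) = w last * (inner ℝ (B i) (B i) : ℝ) := by
    rw [← real_inner_smul_right, ← real_inner_smul_right, hEu]
  rw [horth, hnorm, mul_zero, mul_one] at hcontr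
  exact hwlast hcontr.symm

end HilbertLAux

/-- For every `n`, the eigenvalues of the Hilbert L-matrix `L_n = L_n(1)`
are simple and satisfy `0 < μ_{1,n} < μ_{2,n} < … < μ_{n,n} < 4`; in particular `4` is not
an eigenvalue of `L_n`. -/
theorem hilbert_L_matrix_eigenvalues_in_0_4 (n : ℕ) :
    StrictMono (evals 1 n) ∧ (∀ j : Fin n, 0 < evals 1 n j ∧ evals 1 n j < 4) := by
  have hmono : Monotone (evals 1 n) := by
    have h := Tuple.monotone_sort ((Lmat_isHermitian 1 n).eigenvalues)
    exact fun a b hab => h hab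
  have hinj : Function.Injective (evals 1 n) := by
    intro a b hab
    exact (Tuple.sort ((Lmat_isHermitian 1 n).eigenvalues)).injective
      (HilbertLAux.eig_inj hab)
  exact ⟨hmono.strictMono_of_injective hinj, fun j => HilbertLAux.eig_bounds _⟩
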